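/- Let (H, η) be an extended strip decomposition of a graph G and let Q = (x₀, …, x_k) be an induced path in G between peripheral vertices. Let uv be an edge of H such that |V(Q) ∩ η(uv, u)| ≥ 2, and let L(uv,u), R(uv,u) denote the minimum and maximum indices i with x_i ∈ η(uv, u), and similarly for v. Then L(uv, v) = L(uv, u) and R(uv, v) = R(uv, u); in particular x_{L(uv,u)} and x_{R(uv,u)} both belong to η(uv, u) ∩ η(uv, v). -/
import Mathlib


/-- Closed neighborhood of a set `S` in a graph `G`. -/
def closedNbhd {V : Type*} (G : SimpleGraph V) (S : Set V) : Set V :=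
  S ∪ {v | ∃ s ∈ S, G.Adj s v}

/-- Open neighborhood of a set `S` in a graph `G`. -/
def openNbhd {V : Type*} (G : SimpleGraph V) (S : Set V) : Set V :=
  {v | v ∉ S ∧ ∃ s ∈ S, G.Adj s v}

/-- Reachability inside the induced subgraph of `G` on the vertex set `T`. -/
def ReachIn {V : Type*} (G : SimpleGraph V) (T : Set V) : V → V → Prop :=
  Relation.ReflTransGen (fun a b => G.Adj a b ∧ a ∈ T ∧ b ∈ T)

/-- Total weight of a vertex set. -/
noncomputable def wsum {V : Type*} [Fintype V] (w : V → ℕ) (S : Set V) : ℕ :=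
  ∑ v ∈ S.toFinite.toFinset, w v

/-- `l` is the vertex sequence of an induced path of `G`:
nonempty, no repetitions, and two vertices of `l` are adjacent in `G`
iff they are consecutive in `l`. -/
def IsInducedPathList {V : Type*} (G : SimpleGraph V) (l : List V) : Prop :=
  l ≠ [] ∧ l.Nodup ∧
  ∀ (i j : ℕ) (hi : i < l.length) (hj : j < l.length),
    G.Adj (l.get ⟨i, hi⟩) (l.get ⟨j, hj⟩) ↔ (i + 1 = j ∨ j + 1 = i)

/-- Every connected component of the induced subgraph of `G` on `T`
has `w`-weight at most `b`. -/
def CompsSmall {V : Type*} [Fintype V] (G : SimpleGraph V) (w : V → ℕ)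
    (T : Set V) (b : ℕ) : Prop :=
  ∀ v ∈ T, wsum w {u | ReachIn G T v u} ≤ b

/-- `x`, `y`, `z` form a triangle in `H`. -/
def Tri {H' : Type*} (H : SimpleGraph H') (x y z : H') : Prop :=
  H.Adj x y ∧ H.Adj y z ∧ H.Adj x z

/-- An extended strip decomposition `(H, η)` of a graph `G`.
`ηv x` is `η(x)`, `ηe x y` is `η(xy)`, `ηi x y` is the interface `η(xy, x)`,
and `ηt x y z` is `η(xyz)`. -/
structure ESD {V : Type*} {H' : Type*} (G : SimpleGraph V) (H : SimpleGraph H') where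
  ηv : H' → Set V
  ηe : H' → H' → Set V
  ηi : H' → H' → Set V
  ηt : H' → H' → H' → Set V
  ηe_symm : ∀ x y, ηe x y = ηe y x
  ηt_symm12 : ∀ x y z, ηt x y z = ηt y x z
  ηt_symm23 : ∀ x y z, ηt x y z = ηt x z y
  ηe_empty : ∀ x y, ¬ H.Adj x y → ηe x y = ∅
  ηt_empty : ∀ x y z, ¬ Tri H x y z → ηt x y z = ∅
  ηi_sub : ∀ x y, ηi x y ⊆ ηe x y
  cover : ∀ v : V, (∃ x, v ∈ ηv x) ∨ (∃ x y, v ∈ ηe x y) ∨ (∃ x y z, v ∈ ηt x y z)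
  disj_vv : ∀ x y, x ≠ y → ηv x ∩ ηv y = ∅
  disj_ve : ∀ x y z, ηv x ∩ ηe y z = ∅
  disj_vt : ∀ x a b c, ηv x ∩ ηt a b c = ∅
  disj_ee : ∀ x y a b, ¬ (x = a ∧ y = b) → ¬ (x = b ∧ y = a) → ηe x y ∩ ηe a b = ∅
  disj_et : ∀ x y a b c, ηe x y ∩ ηt a b c = ∅
  disj_tt : ∀ a b c d e f, ({a, b, c} : Set H') ≠ ({d, e, f} : Set H') →
    ηt a b c ∩ ηt d e f = ∅
  complete : ∀ x y z, H.Adj x y → H.Adj x z → y ≠ z →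
    ∀ u ∈ ηi x y, ∀ v ∈ ηi x z, G.Adj u v
  edge_cond : ∀ u v : V, G.Adj u v →
    (∃ x, u ∈ ηv x ∧ v ∈ ηv x) ∨
    (∃ x y, u ∈ ηe x y ∧ v ∈ ηe x y) ∨
    (∃ x y z, u ∈ ηt x y z ∧ v ∈ ηt x y z) ∨
    (∃ x y z, H.Adj x y ∧ H.Adj x z ∧ y ≠ z ∧
      ((u ∈ ηi x y ∧ v ∈ ηi x z) ∨ (v ∈ ηi x y ∧ u ∈ ηi x z))) ∨
    (∃ x y, H.Adj x y ∧ ((u ∈ ηi x y ∧ v ∈ ηv x) ∨ (v ∈ ηi x y ∧ u ∈ ηv x))) ∨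
    (∃ x y z, Tri H x y z ∧
      ((u ∈ ηt x y z ∧ v ∈ ηi x y ∩ ηi y x) ∨ (v ∈ ηt x y z ∧ u ∈ ηi x y ∩ ηi y x)))

namespace ESD

variable {V : Type*} {H' : Type*} {G : SimpleGraph V} {H : SimpleGraph H'}

/-- A rigid extended strip decomposition: every edge of `H` has nonempty interfaces
and every isolated vertex `x` of `H` has `η(x) ≠ ∅`. -/
def IsRigid (D : ESD G H) : Prop :=
  (∀ x y, H.Adj x y → (D.ηi x y).Nonempty) ∧
  (∀ x, (∀ y, ¬ H.Adj x y) → (D.ηv x).Nonempty)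

/-- A vertex `z` of `G` is peripheral in `(H, η)`. -/
def Peripheral (D : ESD G H) (z : V) : Prop :=
  ∃ x y, H.Adj x y ∧ (∀ u, H.Adj x u → u = y) ∧ D.ηi x y = {z} ∧ D.ηv x = ∅

/-- The full edge particle `A_{pq}^{pq}`. -/
def fullEdge (D : ESD G H) (p q : H') : Set V :=
  D.ηv p ∪ D.ηv q ∪ D.ηe p q ∪ {v | ∃ r, v ∈ D.ηt p q r}

/-- Every particle of `D` has `w`-weight at most `b`. -/
def ParticlesSmall [Fintype V] (D : ESD G H) (w : V → ℕ) (b : ℕ) : Prop :=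
  (∀ x, wsum w (D.ηv x) ≤ b) ∧
  (∀ x y, H.Adj x y → wsum w (D.ηe x y \ (D.ηi x y ∪ D.ηi y x)) ≤ b) ∧
  (∀ x y, H.Adj x y → wsum w (D.ηv x ∪ (D.ηe x y \ D.ηi y x)) ≤ b) ∧
  (∀ x y, H.Adj x y → wsum w (D.fullEdge x y) ≤ b) ∧
  (∀ x y z, Tri H x y z → wsum w (D.ηt x y z) ≤ b)

end ESD

/-- The subdivided claw `S_{t,t,t}`: a center vertex and three arms of length `t`. -/
def StttRel (t : ℕ) : (Unit ⊕ Fin 3 × Fin t) → (Unit ⊕ Fin 3 × Fin t) → Prop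
  | Sum.inl _, Sum.inr p => p.2.val = 0
  | Sum.inr p, Sum.inr q => p.1 = q.1 ∧ p.2.val + 1 = q.2.val
  | _, _ => False

def Sttt (t : ℕ) : SimpleGraph (Unit ⊕ Fin 3 × Fin t) :=
  SimpleGraph.fromRel (StttRel t)
section Helpers

variable {V : Type*} {G : SimpleGraph V}

lemma get_congr (l : List V) {i j : ℕ} (h : i = j) (hi : i < l.length) :
    l.get ⟨i, hi⟩ = l.get ⟨j, h ▸ hi⟩ := by subst h; rfl

lemma adj_consec (l : List V) (hl : IsInducedPathList G l) (j : ℕ)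
    (hj : j < l.length) (hj1 : j + 1 < l.length) :
    G.Adj (l.get ⟨j, hj⟩) (l.get ⟨j+1, hj1⟩) :=
  (hl.2.2 j (j+1) hj hj1).mpr (Or.inl rfl)

lemma induced_idx (l : List V) (hl : IsInducedPathList G l) {i j : ℕ}
    (hi : i < l.length) (hj : j < l.length)
    (h : G.Adj (l.get ⟨i, hi⟩) (l.get ⟨j, hj⟩)) : i + 1 = j ∨ j + 1 = i :=
  (hl.2.2 i j hi hj).mp h

lemma get_ne_of_ne (l : List V) (hl : IsInducedPathList G l) {i j : ℕ}
    (hi : i < l.length) (hj : j < l.length) (hij : i ≠ j) :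
    l.get ⟨i, hi⟩ ≠ l.get ⟨j, hj⟩ := by
  intro hc
  exact hij (by simpa using hl.2.1.get_inj_iff.mp hc)

lemma reverse_ipl (l : List V) (hl : IsInducedPathList G l) :
    IsInducedPathList G l.reverse := by
  obtain ⟨h1, h2, h3⟩ := hl
  have hlen : l.reverse.length = l.length := by simp
  refine ⟨by simpa using h1, by simpa using h2, ?_⟩
  intro i j hi hj
  have hi' : i < l.length := by omega
  have hj' : j < l.length := by omega
  have e1 : l.reverse.get ⟨i, hi⟩ = l.get ⟨l.length - 1 - i, by omega⟩ := by
    simp [List.get_eq_getElem, List.getElem_reverse]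
  have e2 : l.reverse.get ⟨j, hj⟩ = l.get ⟨l.length - 1 - j, by omega⟩ := by
    simp [List.get_eq_getElem, List.getElem_reverse]
  rw [e1, e2, h3 _ _ (by omega) (by omega)]
  omega

lemma get_rev (l : List V) {i : ℕ} (hi : i < l.reverse.length) :
    l.reverse.get ⟨i, hi⟩ = l.get ⟨l.length - 1 - i, by simp at hi; omega⟩ := by
  simp [List.get_eq_getElem, List.getElem_reverse]

lemma head_get (l : List V) (hne : l ≠ []) :
    l.head hne = l.get ⟨0, List.length_pos_iff.mpr hne⟩ := by
  simp [List.get_eq_getElem, List.head_eq_getElem]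

lemma getLast_get (l : List V) (hne : l ≠ []) :
    l.getLast hne = l.get ⟨l.length - 1,
      by have := List.length_pos_iff.mpr hne; omega⟩ := by
  simp [List.get_eq_getElem, List.getLast_eq_getElem]

lemma disj_false {α : Type*} {A B : Set α} (h : A ∩ B = ∅) {z : α}
    (ha : z ∈ A) (hb : z ∈ B) : False :=
  absurd (Set.mem_inter ha hb) (by simp [h])

end Helpers

section Escape

variable {V : Type*} {H' : Type*} {G : SimpleGraph V} {H : SimpleGraph H'}

lemma cross_adj (D : ESD G H) {u v w : H'} (huv : H.Adj u v) (hw : w ≠ v)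
    {z y : V} (hz : z ∈ D.ηi u w) (hy : y ∈ D.ηi u v) : G.Adj z y := by
  have haw : H.Adj u w := by
    by_contra h
    have h2 := D.ηi_sub u w hz
    rw [D.ηe_empty u w h] at h2
    exact absurd h2 (Set.notMem_empty z)
  exact D.complete u w v haw huv hw z hz y hy

lemma ee_cases (D : ESD G H) {x y u v : H'} {b : V}
    (h1 : b ∈ D.ηe x y) (h2 : b ∈ D.ηe u v) :
    (x = u ∧ y = v) ∨ (x = v ∧ y = u) := by
  by_contra hc
  exact disj_false (D.disj_ee x y u v (fun h => hc (Or.inl h))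
    (fun h => hc (Or.inr h))) h1 h2

/-- Escape lemma: if `x_t ∈ η(uv)`, no `x_j` with `j < t` lies in any interface
`η(uw,u)`, and no `x_j` with `j ≤ t` lies in `η(uv,v)`, then walking left from `t`
the path stays in `η(u) ∪ η(uv)`; since `x_0` is peripheral this is impossible
(using that `η(uv,u)` has two distinct vertices). -/
lemma escape (D : ESD G H) (l : List V) (hl : IsInducedPathList G l) (hne : l ≠ [])
    (hx : D.Peripheral (l.head hne)) (u v : H')
    (hTwo : ∃ y z : V, y ∈ D.ηi u v ∧ z ∈ D.ηi u v ∧ y ≠ z)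
    (t : ℕ) (ht : t < l.length) (htuv : l.get ⟨t, ht⟩ ∈ D.ηe u v)
    (hA : ∀ j (hj : j < l.length), j < t → ∀ w, l.get ⟨j, hj⟩ ∉ D.ηi u w)
    (hB : ∀ j (hj : j < l.length), j ≤ t → l.get ⟨j, hj⟩ ∉ D.ηi v u) : False := by
  have key : ∀ d, d ≤ t → ∀ (hd : t - d < l.length),
      l.get ⟨t - d, hd⟩ ∈ D.ηv u ∪ D.ηe u v := by
    intro d
    induction d with
    | zero =>
      intro _ hd
      rw [get_congr l (show t - 0 = t by omega)]
      exact Or.inr htuv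
    | succ n ih =>
      intro hd1 hlen
      have hj1eq : t - n = (t - (n+1)) + 1 := by omega
      have hj1len : (t - (n+1)) + 1 < l.length := by omega
      have hb : l.get ⟨(t - (n+1)) + 1, hj1len⟩ ∈ D.ηv u ∪ D.ηe u v := by
        have h0 := ih (by omega) (by omega)
        rwa [get_congr l hj1eq] at h0
      have hadj : G.Adj (l.get ⟨t - (n+1), hlen⟩) (l.get ⟨(t - (n+1)) + 1, hj1len⟩) :=
        adj_consec l hl _ hlen hj1len
      have hbB : l.get ⟨(t - (n+1)) + 1, hj1len⟩ ∉ D.ηi v u :=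
        hB _ hj1len (by omega)
      have hAj : ∀ w, l.get ⟨t - (n+1), hlen⟩ ∉ D.ηi u w :=
        fun w => hA _ hlen (by omega) w
      set a := l.get ⟨t - (n+1), hlen⟩ with hadef
      set b := l.get ⟨(t - (n+1)) + 1, hj1len⟩ with hbdef
      rcases D.edge_cond a b hadj with
        ⟨x, hax, hbx⟩ | ⟨x, y, haxy, hbxy⟩ | ⟨x, y, z, hat, hbt⟩ |
        ⟨x, y, z, hxy, hxz, hyz, hc⟩ | ⟨x, y, hxy, hc⟩ | ⟨x, y, z, htri, hc⟩
      · rcases hb with hbu | hbe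
        · by_cases hxu : x = u
          · subst hxu; exact Or.inl hax
          · exact (disj_false (D.disj_vv x u hxu) hbx hbu).elim
        · exact (disj_false (D.disj_ve x u v) hbx hbe).elim
      · rcases hb with hbu | hbe
        · exact (disj_false (D.disj_ve u x y) hbu hbxy).elim
        · rcases ee_cases D hbxy hbe with ⟨hx1, hy1⟩ | ⟨hx1, hy1⟩
          · subst hx1; subst hy1; exact Or.inr haxy
          · subst hx1; subst hy1; rw [D.ηe_symm] at haxy; exact Or.inr haxy
      · rcases hb with hbu | hbe
        · exact (disj_false (D.disj_vt u x y z) hbu hbt).elim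
        · exact (disj_false (D.disj_et u v x y z) hbe hbt).elim
      · rcases hc with ⟨haxy, hbxz⟩ | ⟨hbxy, haxz⟩
        · rcases hb with hbu | hbe
          · exact (disj_false (D.disj_ve u x z) hbu (D.ηi_sub x z hbxz)).elim
          · rcases ee_cases D (D.ηi_sub x z hbxz) hbe with ⟨hx1, hz1⟩ | ⟨hx1, hz1⟩
            · subst hx1; exact (hAj y haxy).elim
            · subst hx1; subst hz1; exact (hbB hbxz).elim
        · rcases hb with hbu | hbe
          · exact (disj_false (D.disj_ve u x y) hbu (D.ηi_sub x y hbxy)).elim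
          · rcases ee_cases D (D.ηi_sub x y hbxy) hbe with ⟨hx1, hy1⟩ | ⟨hx1, hy1⟩
            · subst hx1; exact (hAj z haxz).elim
            · subst hx1; subst hy1; exact (hbB hbxy).elim
      · rcases hc with ⟨haxy, hbx⟩ | ⟨hbxy, hax⟩
        · rcases hb with hbu | hbe
          · by_cases hxu : x = u
            · subst hxu; exact (hAj y haxy).elim
            · exact (disj_false (D.disj_vv x u hxu) hbx hbu).elim
          · exact (disj_false (D.disj_ve x u v) hbx hbe).elim
        · rcases hb with hbu | hbe
          · exact (disj_false (D.disj_ve u x y) hbu (D.ηi_sub x y hbxy)).elim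
          · rcases ee_cases D (D.ηi_sub x y hbxy) hbe with ⟨hx1, hy1⟩ | ⟨hx1, hy1⟩
            · subst hx1; exact Or.inl hax
            · subst hx1; subst hy1; exact (hbB hbxy).elim
      · rcases hc with ⟨hat, hbint⟩ | ⟨hbt, haint⟩
        · rcases hb with hbu | hbe
          · exact (disj_false (D.disj_ve u x y) hbu (D.ηi_sub x y hbint.1)).elim
          · rcases ee_cases D (D.ηi_sub x y hbint.1) hbe with ⟨hx1, hy1⟩ | ⟨hx1, hy1⟩
            · subst hx1; subst hy1; exact (hbB hbint.2).elim
            · subst hx1; subst hy1; exact (hbB hbint.1).elim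
        · rcases hb with hbu | hbe
          · exact (disj_false (D.disj_vt u x y z) hbu hbt).elim
          · exact (disj_false (D.disj_et u v x y z) hbe hbt).elim
  have hlen0 : 0 < l.length := List.length_pos_iff.mpr hne
  have h0 : l.get ⟨0, hlen0⟩ ∈ D.ηv u ∪ D.ηe u v := by
    have h1 := key t le_rfl (by omega)
    rwa [get_congr l (show t - t = 0 by omega)] at h1
  obtain ⟨p, q, hpq, huniq, hipq, hvp⟩ := hx
  have hhead : l.head hne = l.get ⟨0, hlen0⟩ := head_get l hne
  have h0i : l.get ⟨0, hlen0⟩ ∈ D.ηi p q := by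
    rw [hipq, ← hhead]; exact rfl
  rcases h0 with h0u | h0e
  · exact disj_false (D.disj_ve u p q) h0u (D.ηi_sub p q h0i)
  · rcases ee_cases D (D.ηi_sub p q h0i) h0e with ⟨hp1, hq1⟩ | ⟨hp1, hq1⟩
    · subst hp1; subst hq1
      obtain ⟨y0, z0, hy0, hz0, hyz0⟩ := hTwo
      rw [hipq] at hy0 hz0
      rw [Set.mem_singleton_iff] at hy0 hz0
      exact hyz0 (hy0.trans hz0.symm)
    · subst hp1; subst hq1
      exact hB 0 hlen0 (Nat.zero_le t) h0i

end Escape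

section Core

variable {V : Type*} {H' : Type*} {G : SimpleGraph V} {H : SimpleGraph H'}

lemma core_min (D : ESD G H) (l : List V) (hl : IsInducedPathList G l) (hne : l ≠ [])
    (hx : D.Peripheral (l.head hne)) (hy : D.Peripheral (l.getLast hne))
    (u v : H') (huv : H.Adj u v)
    (h2 : ∃ i j : ℕ, i ≠ j ∧ ∃ (hi : i < l.length) (hj : j < l.length),
      l.get ⟨i, hi⟩ ∈ D.ηi u v ∧ l.get ⟨j, hj⟩ ∈ D.ηi u v) :
    ∃ h : sInf {i : ℕ | ∃ h : i < l.length, l.get ⟨i, h⟩ ∈ D.ηi u v} < l.length,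
      l.get ⟨sInf {i : ℕ | ∃ h : i < l.length, l.get ⟨i, h⟩ ∈ D.ηi u v}, h⟩ ∈
        D.ηi v u := by
  set S : Set ℕ := {i : ℕ | ∃ h : i < l.length, l.get ⟨i, h⟩ ∈ D.ηi u v} with hS
  have hSne : S.Nonempty := by
    obtain ⟨i, j, hij, hi, hj, hiu, hju⟩ := h2
    exact ⟨i, hi, hiu⟩
  have hSbdd : BddAbove S := ⟨l.length, fun i hi => by obtain ⟨h, _⟩ := hi; omega⟩
  obtain ⟨hm, hmuv⟩ := Nat.sInf_mem hSne
  obtain ⟨hM, hMuv⟩ := Nat.sSup_mem hSne hSbdd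
  set m := sInf S with hmdef
  set M := sSup S with hMdef
  have hmM : m < M := by
    obtain ⟨i, j, hij, hi, hj, hiu, hju⟩ := h2
    have h1 : m ≤ i := Nat.sInf_le ⟨hi, hiu⟩
    have h2' : m ≤ j := Nat.sInf_le ⟨hj, hju⟩
    have h3 : i ≤ M := le_csSup hSbdd ⟨hi, hiu⟩
    have h4 : j ≤ M := le_csSup hSbdd ⟨hj, hju⟩
    omega
  have hTwo : ∃ y z : V, y ∈ D.ηi u v ∧ z ∈ D.ηi u v ∧ y ≠ z :=
    ⟨_, _, hmuv, hMuv, get_ne_of_ne l hl hm hM (by omega)⟩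
  refine ⟨hm, ?_⟩
  by_contra hmv
  -- Step 1: no vertex left of m lies in any interface η(uw, u)
  have step1 : ∀ j (hj : j < l.length), j < m → ∀ w, l.get ⟨j, hj⟩ ∉ D.ηi u w := by
    intro j hj hjm w hjw
    by_cases hwv : w = v
    · subst hwv
      have : m ≤ j := Nat.sInf_le ⟨hj, hjw⟩
      omega
    · have hadj := cross_adj D huv hwv hjw hMuv
      have := induced_idx l hl hj hM hadj
      omega
  by_cases hleft : ∃ j, ∃ (hj : j < l.length), j < m ∧ l.get ⟨j, hj⟩ ∈ D.ηi v u
  · -- some earlier vertex is in η(uv, v)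
    obtain ⟨j0, hj0, hj0m, hj0v⟩ := hleft
    set Sv : Set ℕ := {i : ℕ | ∃ h : i < l.length, l.get ⟨i, h⟩ ∈ D.ηi v u} with hSv
    have hSvne : Sv.Nonempty := ⟨j0, hj0, hj0v⟩
    obtain ⟨hm'', hm''v⟩ := Nat.sInf_mem hSvne
    set m'' := sInf Sv with hm''def
    have hm''j0 : m'' ≤ j0 := Nat.sInf_le ⟨hj0, hj0v⟩
    by_cases htwoV : ∃ j', ∃ (hj' : j' < l.length), j' ≠ m'' ∧ l.get ⟨j', hj'⟩ ∈ D.ηi v u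
    · -- η(uv,v) meets the path twice: run escape from m'' with roles swapped
      obtain ⟨j', hj', hj'ne, hj'v⟩ := htwoV
      have hSvbdd : BddAbove Sv := ⟨l.length, fun i hi => by obtain ⟨h, _⟩ := hi; omega⟩
      obtain ⟨hM'', hM''v⟩ := Nat.sSup_mem hSvne hSvbdd
      set M'' := sSup Sv with hM''def
      have hm''M'' : m'' < M'' := by
        have h1 : m'' ≤ j' := Nat.sInf_le ⟨hj', hj'v⟩
        have h2' : j' ≤ M'' := le_csSup hSvbdd ⟨hj', hj'v⟩
        omega
      have step1v : ∀ j (hj : j < l.length), j < m'' → ∀ w,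
          l.get ⟨j, hj⟩ ∉ D.ηi v w := by
        intro j hj hjm w hjw
        by_cases hwu : w = u
        · subst hwu
          have : m'' ≤ j := Nat.sInf_le ⟨hj, hjw⟩
          omega
        · have hadj := cross_adj D huv.symm hwu hjw hM''v
          have := induced_idx l hl hj hM'' hadj
          omega
      refine escape D l hl hne hx v u
        ⟨_, _, hm''v, hM''v, get_ne_of_ne l hl hm'' hM'' (by omega)⟩
        m'' hm'' (D.ηi_sub v u hm''v) step1v ?_
      intro j hj hjm'' hjuv
      have : m ≤ j := Nat.sInf_le ⟨hj, hjuv⟩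
      omega
    · -- η(uv,v) meets the path only at m'': run escape on the reversed path from M
      push_neg at htwoV
      have honly : ∀ j (hj : j < l.length), l.get ⟨j, hj⟩ ∈ D.ηi v u → j = m'' := by
        intro j hj hjv
        by_contra hc
        exact (htwoV j hj hc) hjv
      have hnerev : l.reverse ≠ [] := by simp [hne]
      have hlenrev : l.reverse.length = l.length := by simp
      have hxr : D.Peripheral (l.reverse.head hnerev) := by
        have : l.reverse.head hnerev = l.getLast hne := by
          rw [head_get l.reverse hnerev, get_rev l, getLast_get l hne]
          exact get_congr l (by omega) _
        rwa [this]
      have ht' : l.length - 1 - M < l.reverse.length := by omega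
      refine escape D l.reverse (reverse_ipl l hl) hnerev hxr u v hTwo
        (l.length - 1 - M) ht' ?_ ?_ ?_
      · rw [get_rev l ht', get_congr l (show l.length - 1 - (l.length - 1 - M) = M
          by omega)]
        exact D.ηi_sub u v hMuv
      · intro j hj hjt w hjw
        rw [get_rev l hj] at hjw
        have hidx : l.length - 1 - j < l.length := by omega
        have hiM : M < l.length - 1 - j := by omega
        by_cases hwv : w = v
        · subst hwv
          have : l.length - 1 - j ≤ M := le_csSup hSbdd ⟨hidx, hjw⟩
          omega
        · have hadj := cross_adj D huv hwv hjw hmuv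
          have := induced_idx l hl hidx hm hadj
          omega
      · intro j hj hjt hjv
        rw [get_rev l hj] at hjv
        have hidx : l.length - 1 - j < l.length := by omega
        have := honly _ hidx hjv
        omega
  · -- no earlier vertex in η(uv, v): run escape from m directly
    push_neg at hleft
    refine escape D l hl hne hx u v hTwo m hm (D.ηi_sub u v hmuv) step1 ?_
    intro j hj hjm hjv
    rcases eq_or_lt_of_le hjm with heq | hlt
    · rw [get_congr l heq] at hjv
      exact hmv hjv
    · exact hleft j hj hlt hjv

end Core

section CoreMax

variable {V : Type*} {H' : Type*} {G : SimpleGraph V} {H : SimpleGraph H'}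

lemma core_max (D : ESD G H) (l : List V) (hl : IsInducedPathList G l) (hne : l ≠ [])
    (hx : D.Peripheral (l.head hne)) (hy : D.Peripheral (l.getLast hne))
    (u v : H') (huv : H.Adj u v)
    (h2 : ∃ i j : ℕ, i ≠ j ∧ ∃ (hi : i < l.length) (hj : j < l.length),
      l.get ⟨i, hi⟩ ∈ D.ηi u v ∧ l.get ⟨j, hj⟩ ∈ D.ηi u v) :
    ∃ h : sSup {i : ℕ | ∃ h : i < l.length, l.get ⟨i, h⟩ ∈ D.ηi u v} < l.length,
      l.get ⟨sSup {i : ℕ | ∃ h : i < l.length, l.get ⟨i, h⟩ ∈ D.ηi u v}, h⟩ ∈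
        D.ηi v u := by
  set S : Set ℕ := {i : ℕ | ∃ h : i < l.length, l.get ⟨i, h⟩ ∈ D.ηi u v} with hS
  have hSne : S.Nonempty := by
    obtain ⟨i, j, hij, hi, hj, hiu, hju⟩ := h2
    exact ⟨i, hi, hiu⟩
  have hSbdd : BddAbove S := ⟨l.length, fun i hi => by obtain ⟨h, _⟩ := hi; omega⟩
  obtain ⟨hM, hMuv⟩ := Nat.sSup_mem hSne hSbdd
  set M := sSup S with hMdef
  have hnerev : l.reverse ≠ [] := by simp [hne]
  have hlenrev : l.reverse.length = l.length := by simp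
  have hxr : D.Peripheral (l.reverse.head hnerev) := by
    have : l.reverse.head hnerev = l.getLast hne := by
      rw [head_get l.reverse hnerev, get_rev l, getLast_get l hne]
      exact get_congr l (by omega) _
    rwa [this]
  have hyr : D.Peripheral (l.reverse.getLast hnerev) := by
    have : l.reverse.getLast hnerev = l.head hne := by
      rw [getLast_get l.reverse hnerev, get_rev l, head_get l hne]
      have h0 : 0 < l.length := List.length_pos_iff.mpr hne
      exact get_congr l (by omega) _
    rwa [this]
  have h2r : ∃ i j : ℕ, i ≠ j ∧ ∃ (hi : i < l.reverse.length)
      (hj : j < l.reverse.length),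
      l.reverse.get ⟨i, hi⟩ ∈ D.ηi u v ∧ l.reverse.get ⟨j, hj⟩ ∈ D.ηi u v := by
    obtain ⟨i, j, hij, hi, hj, hiu, hju⟩ := h2
    refine ⟨l.length - 1 - i, l.length - 1 - j, by omega, by omega, by omega, ?_, ?_⟩
    · rw [get_rev l, get_congr l (show l.length - 1 - (l.length - 1 - i) = i by omega)]
      exact hiu
    · rw [get_rev l, get_congr l (show l.length - 1 - (l.length - 1 - j) = j by omega)]
      exact hju
  obtain ⟨h', hmem⟩ := core_min D l.reverse (reverse_ipl l hl) hnerev hxr hyr u v huv h2r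
  set S' : Set ℕ := {i : ℕ | ∃ h : i < l.reverse.length,
    l.reverse.get ⟨i, h⟩ ∈ D.ηi u v} with hS'
  have hMin : l.length - 1 - M ∈ S' := by
    refine ⟨by omega, ?_⟩
    rw [get_rev l, get_congr l (show l.length - 1 - (l.length - 1 - M) = M by omega)]
    exact hMuv
  have hlb : ∀ i ∈ S', l.length - 1 - M ≤ i := by
    rintro i ⟨hi, hiv⟩
    rw [get_rev l] at hiv
    have : l.length - 1 - i ≤ M := le_csSup hSbdd ⟨by omega, hiv⟩
    omega
  have hinf : sInf S' = l.length - 1 - M := by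
    refine le_antisymm (Nat.sInf_le hMin) (hlb _ (Nat.sInf_mem ⟨_, hMin⟩))
  rw [get_congr l.reverse hinf] at hmem
  rw [get_rev l, get_congr l (show l.length - 1 - (l.length - 1 - M) = M by omega)]
    at hmem
  exact ⟨hM, hmem⟩

end CoreMax

/-- if an induced path between peripheral vertices meets an interface
`η(uv, u)` at least twice, the extreme indices in `η(uv, u)` and `η(uv, v)` coincide,
and the corresponding vertices lie in `η(uv, u) ∩ η(uv, v)`. -/
theorem interface_extremes_coincide {V : Type*} {H' : Type*}
    (G : SimpleGraph V) (H : SimpleGraph H') (D : ESD G H)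
    (l : List V) (hl : IsInducedPathList G l) (hne : l ≠ [])
    (hx : D.Peripheral (l.head hne)) (hy : D.Peripheral (l.getLast hne))
    (u v : H') (huv : H.Adj u v)
    (h2 : ∃ i j : ℕ, i ≠ j ∧ ∃ (hi : i < l.length) (hj : j < l.length),
      l.get ⟨i, hi⟩ ∈ D.ηi u v ∧ l.get ⟨j, hj⟩ ∈ D.ηi u v) :
    {i : ℕ | ∃ h : i < l.length, l.get ⟨i, h⟩ ∈ D.ηi v u}.Nonempty ∧
    sInf {i : ℕ | ∃ h : i < l.length, l.get ⟨i, h⟩ ∈ D.ηi v u} =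
      sInf {i : ℕ | ∃ h : i < l.length, l.get ⟨i, h⟩ ∈ D.ηi u v} ∧
    sSup {i : ℕ | ∃ h : i < l.length, l.get ⟨i, h⟩ ∈ D.ηi v u} =
      sSup {i : ℕ | ∃ h : i < l.length, l.get ⟨i, h⟩ ∈ D.ηi u v} ∧
    (∃ h : sInf {i : ℕ | ∃ h : i < l.length, l.get ⟨i, h⟩ ∈ D.ηi u v} < l.length,
      l.get ⟨sInf {i : ℕ | ∃ h : i < l.length, l.get ⟨i, h⟩ ∈ D.ηi u v}, h⟩ ∈
        D.ηi u v ∩ D.ηi v u) ∧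
    (∃ h : sSup {i : ℕ | ∃ h : i < l.length, l.get ⟨i, h⟩ ∈ D.ηi u v} < l.length,
      l.get ⟨sSup {i : ℕ | ∃ h : i < l.length, l.get ⟨i, h⟩ ∈ D.ηi u v}, h⟩ ∈
        D.ηi u v ∩ D.ηi v u) := by
  set S : Set ℕ := {i : ℕ | ∃ h : i < l.length, l.get ⟨i, h⟩ ∈ D.ηi u v} with hS
  set Sv : Set ℕ := {i : ℕ | ∃ h : i < l.length, l.get ⟨i, h⟩ ∈ D.ηi v u} with hSv
  have hSne : S.Nonempty := by
    obtain ⟨i, j, hij, hi, hj, hiu, hju⟩ := h2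
    exact ⟨i, hi, hiu⟩
  have hSbdd : BddAbove S := ⟨l.length, fun i hi => by obtain ⟨h, _⟩ := hi; omega⟩
  have hSvbdd : BddAbove Sv := ⟨l.length, fun i hi => by obtain ⟨h, _⟩ := hi; omega⟩
  obtain ⟨hm, hmuv⟩ := Nat.sInf_mem hSne
  obtain ⟨hM, hMuv⟩ := Nat.sSup_mem hSne hSbdd
  set m := sInf S with hmdef
  set M := sSup S with hMdef
  have hmM : m < M := by
    obtain ⟨i, j, hij, hi, hj, hiu, hju⟩ := h2
    have h1 : m ≤ i := Nat.sInf_le ⟨hi, hiu⟩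
    have h2' : m ≤ j := Nat.sInf_le ⟨hj, hju⟩
    have h3 : i ≤ M := le_csSup hSbdd ⟨hi, hiu⟩
    have h4 : j ≤ M := le_csSup hSbdd ⟨hj, hju⟩
    omega
  obtain ⟨hm2, hminv⟩ := core_min D l hl hne hx hy u v huv h2
  obtain ⟨hM2, hmaxv⟩ := core_max D l hl hne hx hy u v huv h2
  have hmemv : m ∈ Sv := ⟨hm, hminv⟩
  have hMemv : M ∈ Sv := ⟨hM, hmaxv⟩
  have hSvne : Sv.Nonempty := ⟨m, hmemv⟩
  -- no element of Sv below m
  have hlow : ∀ j ∈ Sv, m ≤ j := by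
    rintro j ⟨hj, hjv⟩
    by_contra hc
    push_neg at hc
    have h2v : ∃ i j' : ℕ, i ≠ j' ∧ ∃ (hi : i < l.length) (hj' : j' < l.length),
        l.get ⟨i, hi⟩ ∈ D.ηi v u ∧ l.get ⟨j', hj'⟩ ∈ D.ηi v u :=
      ⟨j, M, by omega, hj, hM, hjv, hmaxv⟩
    obtain ⟨hi2, hiv2⟩ := core_min D l hl hne hx hy v u huv.symm h2v
    have ha : m ≤ sInf Sv := Nat.sInf_le ⟨hi2, hiv2⟩
    have hb : sInf Sv ≤ j := Nat.sInf_le ⟨hj, hjv⟩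
    omega
  -- no element of Sv above M
  have hhigh : ∀ j ∈ Sv, j ≤ M := by
    rintro j ⟨hj, hjv⟩
    by_contra hc
    push_neg at hc
    have h2v : ∃ i j' : ℕ, i ≠ j' ∧ ∃ (hi : i < l.length) (hj' : j' < l.length),
        l.get ⟨i, hi⟩ ∈ D.ηi v u ∧ l.get ⟨j', hj'⟩ ∈ D.ηi v u :=
      ⟨m, j, by omega, hm, hj, hminv, hjv⟩
    obtain ⟨hi2, hiv2⟩ := core_max D l hl hne hx hy v u huv.symm h2v
    have ha : sSup Sv ≤ M := le_csSup hSbdd ⟨hi2, hiv2⟩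
    have hb : j ≤ sSup Sv := le_csSup hSvbdd ⟨hj, hjv⟩
    omega
  refine ⟨hSvne, ?_, ?_, ⟨hm, hmuv, hminv⟩, ⟨hM, hMuv, hmaxv⟩⟩
  · exact le_antisymm (Nat.sInf_le hmemv) (hlow _ (Nat.sInf_mem hSvne))
  · exact le_antisymm (hhigh _ (Nat.sSup_mem hSvne hSvbdd)) (le_csSup hSvbdd hMemv)
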